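/- Let F be a field of characteristic p ≥ 3 and let h be the Heisenberg algebra over F with basis (e₁, e₂, e₃). Define p-maps ω_{x*} and ω_{y*} on h by ω_{x*}(α·e₁ + β·e₂ + γ·e₃) = α^p·e₃ and ω_{y*}(α·e₁ + β·e₂ + γ·e₃) = β^p·e₃. Then the restricted Lie algebras (h, ω_{x*}) and (h, ω_{y*}) are restricted-isomorphic: there exists a Lie algebra automorphism φ of h such that φ(ω_{x*}(u)) = ω_{y*}(φ(u)) for all u ∈ h. -/

import Mathlib

/-- Over a field of characteristic `p ≥ 3`, the restricted Heisenberg algebras given by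
the `p`-maps `ω_{x*}` and `ω_{y*}` are isomorphic as restricted Lie algebras. -/
theorem statement4 (F : Type*) [Field F] (p : ℕ) [CharP F p] (hp : 3 ≤ p)
    (h : Type*) [LieRing h] [LieAlgebra F h]
    (E : Module.Basis (Fin 3) F h)
    (hE01 : ⁅E 0, E 1⁆ = E 2) (hE02 : ⁅E 0, E 2⁆ = 0) (hE12 : ⁅E 1, E 2⁆ = 0)
    (ωx ωy : h → h)
    (hωx : ∀ α β γ : F, ωx (α • E 0 + β • E 1 + γ • E 2) = α ^ p • E 2)
    (hωy : ∀ α β γ : F, ωy (α • E 0 + β • E 1 + γ • E 2) = β ^ p • E 2) :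
    ∃ φ : h ≃ₗ⁅F⁆ h, ∀ u : h, φ (ωx u) = ωy (φ u) := by
  -- φ : E0 ↦ E1, E1 ↦ -E0, E2 ↦ E2
  set f : h →ₗ[F] h := E.constr F ![E 1, -E 0, E 2] with hf
  set g : h →ₗ[F] h := E.constr F ![-(E 1), E 0, E 2] with hg
  have hf0 : f (E 0) = E 1 := by simp [hf]
  have hf1 : f (E 1) = -E 0 := by
    have := E.constr_basis F ![E 1, -E 0, E 2] 1
    simpa [hf] using this
  have hf2 : f (E 2) = E 2 := by
    have := E.constr_basis F ![E 1, -E 0, E 2] 2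
    simpa [hf] using this
  have hg0 : g (E 0) = -(E 1) := by simp [hg]
  have hg1 : g (E 1) = E 0 := by
    have := E.constr_basis F ![-(E 1), E 0, E 2] 1
    simpa [hg] using this
  have hg2 : g (E 2) = E 2 := by
    have := E.constr_basis F ![-(E 1), E 0, E 2] 2
    simpa [hg] using this
  have hfg : f ∘ₗ g = LinearMap.id := by
    apply E.ext
    intro i
    fin_cases i <;>
      simp [hf0, hf1, hf2, hg0, hg1, hg2]
  have hgf : g ∘ₗ f = LinearMap.id := by
    apply E.ext
    intro i
    fin_cases i <;>
      simp [hf0, hf1, hf2, hg0, hg1, hg2]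
  -- brackets among basis vectors, all directions
  have hE10 : ⁅E 1, E 0⁆ = -E 2 := by rw [← lie_skew, hE01]
  have hE20 : ⁅E 2, E 0⁆ = 0 := by rw [← lie_skew, hE02, neg_zero]
  have hE21 : ⁅E 2, E 1⁆ = 0 := by rw [← lie_skew, hE12, neg_zero]
  have key : ∀ i j : Fin 3, f ⁅E i, E j⁆ = ⁅f (E i), f (E j)⁆ := by
    intro i j
    fin_cases i <;> fin_cases j <;>
      simp [hf0, hf1, hf2, hE01, hE02, hE12, hE10, hE20, hE21]
  have hmaplie : ∀ x y : h, f ⁅x, y⁆ = ⁅f x, f y⁆ := by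
    let B1 : h →ₗ[F] h →ₗ[F] h :=
      LinearMap.mk₂ F (fun x y => f ⁅x, y⁆)
        (fun x x' y => by simp only [add_lie, map_add])
        (fun c x y => by simp only [smul_lie, map_smul])
        (fun x y y' => by simp only [lie_add, map_add])
        (fun c x y => by simp only [lie_smul, map_smul])
    let B2 : h →ₗ[F] h →ₗ[F] h :=
      LinearMap.mk₂ F (fun x y => ⁅f x, f y⁆)
        (fun x x' y => by simp only [map_add, add_lie])
        (fun c x y => by simp only [map_smul, smul_lie])
        (fun x y y' => by simp only [map_add, lie_add])
        (fun c x y => by simp only [map_smul, lie_smul])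
    have hB : B1 = B2 := by
      apply E.ext; intro i
      apply E.ext; intro j
      simpa [B1, B2] using key i j
    intro x y
    simpa [B1, B2] using LinearMap.congr_fun (LinearMap.congr_fun hB x) y
  let e : h ≃ₗ[F] h := LinearEquiv.ofLinear f g hfg hgf
  refine ⟨{ e with map_lie' := fun {x y} => hmaplie x y }, ?_⟩
  intro u
  have hrepr : u = E.repr u 0 • E 0 + E.repr u 1 • E 1 + E.repr u 2 • E 2 := by
    have := E.sum_repr u
    rw [Fin.sum_univ_three] at this
    exact this.symm
  set α := E.repr u 0
  set β := E.repr u 1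
  set γ := E.repr u 2
  have h1 : ωx u = α ^ p • E 2 := by rw [hrepr]; exact hωx α β γ
  have h2 : f u = (-β) • E 0 + α • E 1 + γ • E 2 := by
    rw [hrepr]
    simp [hf0, hf1, hf2, smul_neg, neg_smul]
    abel
  show f (ωx u) = ωy (f u)
  rw [h1, h2, hωy (-β) α γ, map_smul, hf2]
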